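/- arXiv:2503.05579 — 7 statements merged into one kernel-verified Lean document; each statement's English description precedes it below -/
import Mathlib

section
/- Let F be a collection and F1, F2 be stacks on a nonempty set S. Then F ⊓ F1 ⊆ F2 if and only if F1 ⊆ (F ⊓ F2*)*, where F ⊓ G := {A ∩ B : A ∈ F, B ∈ G}. -/
variable {S : Type*}

/-- The mesh of a collection `F` on `S`. -/
def mesh (F : Set (Set S)) : Set (Set S) :=
  {A | ∀ B ∈ F, (A ∩ B).Nonempty}

/-- A stack is an upward closed collection. -/
def IsStack (F : Set (Set S)) : Prop :=
  ∀ A ∈ F, ∀ B : Set S, A ⊆ B → B ∈ F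

/-- A filter: a nonempty stack closed under finite intersections. -/
def IsFilterColl (F : Set (Set S)) : Prop :=
  IsStack F ∧ F.Nonempty ∧ ∀ A ∈ F, ∀ B ∈ F, A ∩ B ∈ F

/-- A grill: a stack not containing `∅` satisfying the Ramsey property. -/
def IsGrill (G : Set (Set S)) : Prop :=
  IsStack G ∧ ∅ ∉ G ∧ ∀ A B : Set S, A ∪ B ∈ G → A ∈ G ∨ B ∈ G

/-- `F ⊓ G := {A ∩ B : A ∈ F, B ∈ G}`. -/
def smash (F G : Set (Set S)) : Set (Set S) :=
  {C | ∃ A ∈ F, ∃ B ∈ G, C = A ∩ B}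

/-- A proper collection: nonempty and not containing `∅`. -/
def IsProperColl (F : Set (Set S)) : Prop :=
  F.Nonempty ∧ ∅ ∉ F

theorem smash_galois [Nonempty S] (F F1 F2 : Set (Set S))
    (hF1 : IsStack F1) (hF2 : IsStack F2) :
    smash F F1 ⊆ F2 ↔ F1 ⊆ mesh (smash F (mesh F2)) := by
  constructor
  · intro h B hB C hC
    obtain ⟨A, hA, D, hD, rfl⟩ := hC
    have hAB : A ∩ B ∈ F2 := h ⟨A, hA, B, hB, rfl⟩
    obtain ⟨x, hxD, hxA, hxB⟩ := hD _ hAB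
    exact ⟨x, ⟨hxB, hxA, hxD⟩⟩
  · intro h C hC
    obtain ⟨A, hA, B, hB, rfl⟩ := hC
    by_contra hne
    have hD : (A ∩ B)ᶜ ∈ mesh F2 := by
      intro E hE
      by_contra hcon
      rw [Set.not_nonempty_iff_eq_empty] at hcon
      refine hne (hF2 _ hE _ fun e he => ?_)
      by_contra hce
      exact absurd hcon (Set.nonempty_iff_ne_empty.mp ⟨e, hce, he⟩)
    obtain ⟨x, hxB, hxA, hxD⟩ := h hB _ ⟨A, hA, (A ∩ B)ᶜ, hD, rfl⟩
    exact hxD ⟨hxA, hxB⟩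
end

section
/- If F is a stack on a nonempty set S, then F ⊓ F* is a grill on S, which is proper if and only if F is proper. -/
variable {S : Type*}

theorem smash_mesh_isGrill [Nonempty S] (F : Set (Set S)) (hF : IsStack F) :
    IsGrill (smash F (mesh F)) ∧ (IsProperColl (smash F (mesh F)) ↔ IsProperColl F) := by
  have hmesh_stack : IsStack (mesh F) := by
    intro A hA B hAB C hC
    exact (hA C hC).mono (Set.inter_subset_inter_left C hAB)
  have hempty : (∅ : Set S) ∉ smash F (mesh F) := by
    rintro ⟨A, hA, B, hB, hEq⟩
    obtain ⟨x, hx⟩ := hB A hA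
    exact absurd (hEq ▸ ⟨hx.2, hx.1⟩ : x ∈ (∅ : Set S)) (Set.notMem_empty x)
  have hstack : IsStack (smash F (mesh F)) := by
    rintro C ⟨A, hA, B, hB, rfl⟩ D hCD
    refine ⟨A ∪ D, hF A hA _ Set.subset_union_left,
      B ∪ D, hmesh_stack B hB _ Set.subset_union_left, ?_⟩
    ext x
    constructor
    · intro hx; exact ⟨Or.inr hx, Or.inr hx⟩
    · rintro ⟨hx1 | hx1, hx2 | hx2⟩
      · exact hCD ⟨hx1, hx2⟩
      · exact hx2
      · exact hx1
      · exact hx1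
  have hramsey : ∀ X Y : Set S, X ∪ Y ∈ smash F (mesh F) →
      X ∈ smash F (mesh F) ∨ Y ∈ smash F (mesh F) := by
    rintro X Y ⟨A, hA, B, hB, hXY⟩
    by_cases hXm : X ∪ Aᶜ ∈ mesh F
    · left
      refine ⟨A, hA, X ∪ Aᶜ, hXm, ?_⟩
      have hXA : X ⊆ A := by
        intro x hx
        have h : x ∈ X ∪ Y := Or.inl hx
        rw [hXY] at h
        exact h.1
      ext x
      constructor
      · intro hx; exact ⟨hXA hx, Or.inl hx⟩
      · rintro ⟨hxA, hxX | hxAc⟩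
        · exact hxX
        · exact absurd hxA hxAc
    · right
      simp only [mesh, Set.mem_setOf_eq, not_forall] at hXm
      obtain ⟨D, hD, hDne⟩ := hXm
      rw [Set.not_nonempty_iff_eq_empty] at hDne
      have hDprop : ∀ x ∈ D, x ∉ X ∧ x ∈ A := by
        intro x hx
        constructor
        · intro hxX
          have h : x ∈ (X ∪ Aᶜ) ∩ D := ⟨Or.inl hxX, hx⟩
          rw [hDne] at h
          exact h
        · by_contra hxA
          have h : x ∈ (X ∪ Aᶜ) ∩ D := ⟨Or.inr hxA, hx⟩
          rw [hDne] at h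
          exact h
      refine ⟨D ∪ Y, hF D hD _ Set.subset_union_left, Y ∪ Dᶜ, ?_, ?_⟩
      · intro E hE
        by_contra hne
        rw [Set.not_nonempty_iff_eq_empty] at hne
        obtain ⟨x, hxB, hxE⟩ := hB E hE
        have hxYD : x ∉ Y ∧ x ∈ D := by
          constructor
          · intro hxY
            have h : x ∈ (Y ∪ Dᶜ) ∩ E := ⟨Or.inl hxY, hxE⟩
            rw [hne] at h
            exact h
          · by_contra hxD
            have h : x ∈ (Y ∪ Dᶜ) ∩ E := ⟨Or.inr hxD, hxE⟩
            rw [hne] at h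
            exact h
        obtain ⟨hxX, hxA⟩ := hDprop x hxYD.2
        have : x ∈ X ∪ Y := by
          have h : x ∈ A ∩ B := ⟨hxA, hxB⟩
          rw [← hXY] at h
          exact h
        rcases this with h | h
        · exact hxX h
        · exact hxYD.1 h
      · ext x
        constructor
        · intro hx; exact ⟨Or.inr hx, Or.inl hx⟩
        · rintro ⟨hx1 | hx1, hx2 | hx2⟩
          · exact hx2
          · exact absurd hx1 hx2
          · exact hx2
          · exact hx1
  refine ⟨⟨hstack, hempty, hramsey⟩, ?_, ?_⟩
  · rintro ⟨⟨C, hC⟩, -⟩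
    obtain ⟨A, hA, B, hB, -⟩ := hC
    refine ⟨⟨A, hA⟩, fun hES => ?_⟩
    obtain ⟨x, hx⟩ := hB ∅ hES
    exact Set.notMem_empty x hx.2
  · rintro ⟨⟨A, hA⟩, hES⟩
    refine ⟨⟨A, A, hA, Set.univ, ?_, by simp⟩, hempty⟩
    intro E hE
    rcases Set.eq_empty_or_nonempty E with rfl | ⟨x, hx⟩
    · exact absurd hE hES
    · exact ⟨x, trivial, hx⟩
end

section
/- Let S be a semigroup and F, G stacks on S. Then the mesh of the product of F and G equals the product of the meshes: (F · G)* = F* · G*. -/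
variable {S : Type*}

variable [Semigroup S]

/-- The derived set of `A` along a collection `F`: `{h : h⁻¹A ∈ F}`. -/
def derivSet (A : Set S) (F : Set (Set S)) : Set S :=
  {h | {x | h * x ∈ A} ∈ F}

/-- The product of collections: `F · G := {A : A'(G) ∈ F}`. -/
def cprod (F G : Set (Set S)) : Set (Set S) :=
  {A | derivSet A G ∈ F}

theorem mesh_cprod (F G : Set (Set S)) (hF : IsStack F) (hG : IsStack G) :
    mesh (cprod F G) = cprod (mesh F) (mesh G) := by
  ext A
  constructor
  · intro hA
    -- show derivSet A (mesh G) ∈ mesh F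
    intro C hC
    by_contra hemp
    rw [Set.not_nonempty_iff_eq_empty] at hemp
    have key : C ⊆ derivSet Aᶜ G := by
      intro h hh
      have hnm : {x | h * x ∈ A} ∉ mesh G := by
        intro hm
        have : h ∈ derivSet A (mesh G) ∩ C := ⟨hm, hh⟩
        rw [hemp] at this
        exact this
      simp only [mesh, Set.mem_setOf_eq, not_forall] at hnm
      obtain ⟨D, hD, hDe⟩ := hnm
      rw [Set.not_nonempty_iff_eq_empty] at hDe
      apply hG D hD
      intro x hx
      simp only [Set.mem_setOf_eq, Set.mem_compl_iff]
      intro hxa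
      exact Set.eq_empty_iff_forall_notMem.mp hDe x ⟨hxa, hx⟩
    have hAc : Aᶜ ∈ cprod F G := hF C hC _ key
    have := hA Aᶜ hAc
    simp at this
  · intro hA B hB
    -- hA : derivSet A (mesh G) ∈ mesh F, hB : derivSet B G ∈ F
    obtain ⟨h, hhA, hhB⟩ := hA (derivSet B G) hB
    obtain ⟨x, hxA, hxB⟩ := hhA _ hhB
    exact ⟨h * x, hxA, hxB⟩
end

section
/- Let S be a semigroup and let F1, F2, G1, G2 be stacks on S. Then (F1 · G1) ⊓ (F2 · G2) ⊆ (F1 ⊓ F2) · (G1 ⊓ G2). -/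
variable {S : Type*}

variable [Semigroup S]

lemma smash_isStack {F G : Set (Set S)} (hF : IsStack F) (hG : IsStack G) :
    IsStack (smash F G) := by
  rintro C ⟨A, hA, B, hB, rfl⟩ D hD
  exact ⟨A ∪ D, hF A hA _ Set.subset_union_left, B ∪ D, hG B hB _ Set.subset_union_left,
    by
      ext x; constructor
      · intro hx; exact ⟨Or.inr hx, Or.inr hx⟩
      · rintro ⟨ha | hd, hb | hd⟩
        exacts [hD ⟨ha, hb⟩, hd, hd, hd]⟩

theorem smash_cprod_subset (F1 F2 G1 G2 : Set (Set S))
    (hF1 : IsStack F1) (hF2 : IsStack F2) (hG1 : IsStack G1) (hG2 : IsStack G2) :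
    smash (cprod F1 G1) (cprod F2 G2) ⊆ cprod (smash F1 F2) (smash G1 G2) := by
  rintro C ⟨A, hA, B, hB, rfl⟩
  refine smash_isStack hF1 hF2 _ ⟨_, hA, _, hB, rfl⟩ _ ?_
  rintro h ⟨h1, h2⟩
  exact ⟨_, h1, _, h2, rfl⟩
end

section
/- Let S be a semigroup. If F1 and F2 are idempotent collections on S (that is, F_i ⊆ F_i · F_i), then F1 ⊓ F2 is idempotent. -/
variable {S : Type*}

variable [Semigroup S]

theorem smash_idempotent (F1 F2 : Set (Set S))
    (hF1 : IsStack F1) (hF2 : IsStack F2)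
    (h1 : F1 ⊆ cprod F1 F1) (h2 : F2 ⊆ cprod F2 F2) :
    smash F1 F2 ⊆ cprod (smash F1 F2) (smash F1 F2) := by
  have hstack : IsStack (smash F1 F2) := by
    rintro C ⟨A, hA, B, hB, rfl⟩ X hX
    refine ⟨A ∪ X, hF1 A hA _ Set.subset_union_left, B ∪ X,
      hF2 B hB _ Set.subset_union_left, ?_⟩
    ext x
    constructor
    · intro hx; exact ⟨Or.inr hx, Or.inr hx⟩
    · rintro ⟨hA' | hX', hB' | hX'⟩ <;> first | exact hX' | exact hX ⟨hA', hB'⟩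
  rintro C ⟨A, hA, B, hB, rfl⟩
  have key : derivSet A F1 ∩ derivSet B F2 ⊆ derivSet (A ∩ B) (smash F1 F2) := by
    rintro h ⟨hhA, hhB⟩
    exact ⟨_, hhA, _, hhB, rfl⟩
  exact hstack _ ⟨_, h1 hA, _, h2 hB, rfl⟩ _ key
end

section
/- Let S be a semigroup and F, G collections on S. Then the mesh of the (F,G)-syndetic sets equals the (F,G)-thick sets: Syn(F,G)* = Thick(F,G). -/
variable {S : Type*}

variable [Semigroup S]

/-- A set `A` is `(F,G)`-syndetic. -/
def relSyn (F G : Set (Set S)) : Set (Set S) :=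
  {A | ∀ B ∈ F, ∃ H : Finset S, H.Nonempty ∧ ↑H ⊆ B ∧
    (⋃ h ∈ H, {x | h * x ∈ A}) ∈ mesh (mesh G)}

/-- A set `A` is `(F,G)`-thick. -/
def relThick (F G : Set (Set S)) : Set (Set S) :=
  {A | ∃ B ∈ F, ∀ H : Finset S, H.Nonempty → ↑H ⊆ B →
    (⋂ h ∈ H, {x | h * x ∈ A}) ∈ mesh G}

theorem mesh_relSyn_eq_relThick (F G : Set (Set S)) :
    mesh (relSyn F G) = relThick F G := by
  ext A
  constructor
  · intro hA
    have hc : Aᶜ ∉ relSyn F G := by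
      intro h
      have := hA Aᶜ h
      simp [Set.inter_compl_self] at this
    simp only [relSyn, Set.mem_setOf_eq, not_forall] at hc
    obtain ⟨B, hB, hne⟩ := hc
    refine ⟨B, hB, fun H hH hHB => ?_⟩
    by_contra hmem
    apply hne
    refine ⟨H, hH, hHB, ?_⟩
    have heq : (⋃ h ∈ H, {x | h * x ∈ Aᶜ}) = (⋂ h ∈ H, {x | h * x ∈ A})ᶜ := by
      ext x; simp
    rw [heq]
    intro D hD
    rw [Set.inter_comm, ← Set.not_disjoint_iff_nonempty_inter]
    intro hdis
    apply hmem
    have hsub : D ⊆ ⋂ h ∈ H, {x | h * x ∈ A} := by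
      intro x hx
      by_contra hxc
      exact hdis.ne_of_mem hx hxc rfl
    intro E hE
    obtain ⟨x, hx⟩ := hD E hE
    exact ⟨x, hsub hx.1, hx.2⟩
  · rintro ⟨B, hB, hthick⟩ C hC
    obtain ⟨H, hHne, hHB, hU⟩ := hC B hB
    obtain ⟨x, hx1, hx2⟩ := hU _ (hthick H hHne hHB)
    simp only [Set.mem_iUnion] at hx1
    obtain ⟨h, hhH, hhx⟩ := hx1
    simp only [Set.mem_iInter] at hx2
    exact ⟨h * x, hx2 h hhH, hhx⟩
end

section
/- A subset A of a semigroup S is piecewise syndetic if and only if there exists an idempotent ultrafilter e on S such that the derived set A'(e) = {h ∈ S : h⁻¹A ∈ e} is syndetic. -/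
variable {S : Type*}

variable [Semigroup S]

/-- An ultrafilter: both a filter and a grill. -/
def IsUltra (q : Set (Set S)) : Prop :=
  IsFilterColl q ∧ IsGrill q

/-- A syndetic subset of a semigroup. -/
def Syndetic (A : Set S) : Prop :=
  ∃ H : Finset S, H.Nonempty ∧ (⋃ h ∈ H, {x | h * x ∈ A}) = Set.univ

/-- A thick subset of a semigroup. -/
def ThickSet (A : Set S) : Prop :=
  ∀ H : Finset S, H.Nonempty → (⋂ h ∈ H, {x | h * x ∈ A}).Nonempty

/-- A piecewise syndetic subset of a semigroup. -/
def PiecewiseSyndetic (A : Set S) : Prop :=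
  ∃ B C : Set S, Syndetic B ∧ ThickSet C ∧ A = B ∩ C

/-! ### Auxiliary machinery -/

attribute [local instance] Ultrafilter.semigroup

open Filter
open scoped Pointwise
set_option linter.unusedSectionVars false

lemma aux_mem_ultra_mul (U V : Ultrafilter S) (A : Set S) :
    A ∈ U * V ↔ derivSet A {B : Set S | B ∈ V} ∈ U := by
  have h := Ultrafilter.eventually_mul U V (· ∈ A)
  simp only [Filter.eventually_iff, Ultrafilter.mem_coe, Set.setOf_mem_eq] at h
  exact h

lemma aux_isUltra_coe (U : Ultrafilter S) : IsUltra {A : Set S | A ∈ U} := by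
  refine ⟨⟨?_, ⟨Set.univ, Filter.univ_mem⟩, ?_⟩, ?_, ?_, ?_⟩
  · intro A hA B hAB; exact Filter.mem_of_superset hA hAB
  · intro A hA B hB; exact Filter.inter_mem hA hB
  · intro A hA B hAB; exact Filter.mem_of_superset hA hAB
  · exact Ultrafilter.empty_notMem (f := U)
  · intro A B hAB; exact (Ultrafilter.union_mem_iff).1 hAB

lemma aux_exists_ultrafilter_of_isUltra {e : Set (Set S)} (he : IsUltra e) :
    ∃ U : Ultrafilter S, e = {A : Set S | A ∈ U} := by
  obtain ⟨⟨stk, ⟨D, hD⟩, hinter⟩, _, hempty, hram⟩ := he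
  have huniv : Set.univ ∈ e := stk D hD _ (Set.subset_univ D)
  let F : Filter S :=
    { sets := e
      univ_sets := huniv
      sets_of_superset := fun h hsub => stk _ h _ hsub
      inter_sets := fun hA hB => hinter _ hA _ hB }
  have key : ∀ s : Set S, sᶜ ∉ F ↔ s ∈ F := by
    intro s
    constructor
    · intro h
      rcases hram s sᶜ (by rw [Set.union_compl_self]; exact huniv) with h1 | h1
      · exact h1
      · exact absurd h1 h
    · intro hs hc
      have h2 : s ∩ sᶜ ∈ e := hinter _ hs _ hc
      rw [Set.inter_compl_self] at h2
      exact hempty h2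
  exact ⟨Ultrafilter.ofComplNotMemIff F key, rfl⟩

lemma aux_cprod_coe (U V : Ultrafilter S) :
    cprod {A : Set S | A ∈ U} {A : Set S | A ∈ V} = {A : Set S | A ∈ U * V} := by
  ext A
  simp only [cprod, Set.mem_setOf_eq, aux_mem_ultra_mul]

lemma aux_thick_of_syndetic_deriv (U : Ultrafilter S) {A : Set S} (H : Finset S)
    (hcov : (⋃ h ∈ H, {x | h * x ∈ derivSet A {B : Set S | B ∈ U}}) = Set.univ) :
    ThickSet (⋃ h ∈ H, {x : S | h * x ∈ A}) := by
  intro F hF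
  have choice : ∀ f : S, ∃ h ∈ H, {x | (h * f) * x ∈ A} ∈ U := by
    intro f
    have hf : f ∈ ⋃ h ∈ H, {x | h * x ∈ derivSet A {B : Set S | B ∈ U}} :=
      hcov ▸ Set.mem_univ f
    simp only [Set.mem_iUnion, Set.mem_setOf_eq, derivSet, exists_prop] at hf
    exact hf
  choose g hgH hgU using choice
  have hbig : (⋂ f ∈ F, {x | (g f * f) * x ∈ A}) ∈ U :=
    (Filter.biInter_finset_mem F).2 fun f _ => hgU f
  obtain ⟨x, hx⟩ := Ultrafilter.nonempty_of_mem hbig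
  simp only [Set.mem_iInter, Set.mem_setOf_eq] at hx
  refine ⟨x, ?_⟩
  simp only [Set.mem_iInter, Set.mem_setOf_eq, Set.mem_iUnion]
  intro f hf
  exact ⟨g f, hgH f, by rw [← mul_assoc]; exact hx f hf⟩

lemma aux_pws_to_thick {A : Set S} (h : PiecewiseSyndetic A) :
    ∃ H : Finset S, H.Nonempty ∧ ThickSet (⋃ h ∈ H, {x : S | h * x ∈ A}) := by
  classical
  obtain ⟨B, C, ⟨H, hH, hcov⟩, hC, rfl⟩ := h
  refine ⟨H, hH, ?_⟩
  intro F hF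
  obtain ⟨x, hx⟩ := hC (H * F) (hH.mul hF)
  simp only [Set.mem_iInter, Set.mem_setOf_eq] at hx
  refine ⟨x, ?_⟩
  simp only [Set.mem_iInter, Set.mem_setOf_eq, Set.mem_iUnion]
  intro f hf
  have h1 : f * x ∈ ⋃ h ∈ H, {y | h * y ∈ B} := hcov ▸ Set.mem_univ _
  simp only [Set.mem_iUnion, Set.mem_setOf_eq] at h1
  obtain ⟨h, hh, hB⟩ := h1
  refine ⟨h, hh, hB, ?_⟩
  have h2 := hx (h * f) (Finset.mul_mem_mul hh hf)
  rwa [mul_assoc] at h2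

lemma aux_thick_to_pws {A : Set S} (H : Finset S) (hH : H.Nonempty)
    (hT : ThickSet (⋃ h ∈ H, {x : S | h * x ∈ A})) : PiecewiseSyndetic A := by
  classical
  set T : Set S := ⋃ h ∈ H, {x : S | h * x ∈ A} with hTdef
  refine ⟨A ∪ Tᶜ, A ∪ T, ?_, ?_, ?_⟩
  · refine ⟨H ∪ H * H, Finset.Nonempty.inl hH, ?_⟩
    apply Set.eq_univ_of_forall
    intro s
    simp only [Set.mem_iUnion, Set.mem_setOf_eq, Set.mem_union, Set.mem_compl_iff]
    by_cases hcase : ∀ h ∈ H, h * s ∈ T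
    · obtain ⟨h₀, hh₀⟩ := hH
      have h1 : h₀ * s ∈ T := hcase h₀ hh₀
      rw [hTdef] at h1
      simp only [Set.mem_iUnion, Set.mem_setOf_eq] at h1
      obtain ⟨h', hh', hA'⟩ := h1
      exact ⟨h' * h₀, Finset.mem_union_right _ (Finset.mul_mem_mul hh' hh₀),
        Or.inl (by rwa [mul_assoc])⟩
    · push_neg at hcase
      obtain ⟨h, hh, hnT⟩ := hcase
      exact ⟨h, Finset.mem_union_left _ hh, Or.inr hnT⟩
  · intro F hF
    obtain ⟨x, hx⟩ := hT F hF
    refine ⟨x, ?_⟩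
    simp only [Set.mem_iInter, Set.mem_setOf_eq, Set.mem_union] at hx ⊢
    intro f hf
    exact Or.inr (hx f hf)
  · ext x
    by_cases h1 : x ∈ A <;> by_cases h2 : x ∈ T <;> simp [h1, h2]

theorem piecewiseSyndetic_iff_idempotent (A : Set S) :
    PiecewiseSyndetic A ↔
      ∃ e : Set (Set S), IsUltra e ∧ cprod e e = e ∧ Syndetic (derivSet A e) := by
  constructor
  · intro hA
    classical
    obtain ⟨H, hH, hT⟩ := aux_pws_to_thick hA
    obtain ⟨h₀, hh₀⟩ := hH
    haveI : Nonempty S := ⟨h₀⟩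
    set T : Set S := ⋃ h ∈ H, {x : S | h * x ∈ A} with hTdef
    set G : Set (Set S) := Set.range (fun s : S => {x | s * x ∈ T}) with hGdef
    have hne : (Filter.generate G).NeBot := by
      rw [Filter.generate_neBot_iff]
      intro t hts htfin
      have hch : ∀ u : Set S, ∃ s : S, u ∈ t → {x | s * x ∈ T} = u := by
        intro u
        by_cases hu : u ∈ t
        · obtain ⟨s, hs⟩ := hts hu
          exact ⟨s, fun _ => hs⟩
        · exact ⟨h₀, fun h => absurd h hu⟩
      choose w hw using hch
      rcases Set.eq_empty_or_nonempty t with ht0 | htne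
      · simp [ht0]
      · let W : Finset S := htfin.toFinset.image w
        have hWne : W.Nonempty := by
          obtain ⟨u, hu⟩ := htne
          exact ⟨w u, Finset.mem_image_of_mem w (htfin.mem_toFinset.2 hu)⟩
        obtain ⟨x, hx⟩ := hT W hWne
        simp only [Set.mem_iInter, Set.mem_setOf_eq] at hx
        refine ⟨x, Set.mem_sInter.2 ?_⟩
        intro u hu
        have hmem : w u ∈ W := Finset.mem_image_of_mem w (htfin.mem_toFinset.2 hu)
        have hx2 : x ∈ {y | w u * y ∈ T} := hx _ hmem
        rwa [hw u hu] at hx2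
    obtain ⟨p, hp⟩ := Ultrafilter.exists_le (Filter.generate G)
    have hpT : ∀ s : S, {x | s * x ∈ T} ∈ p := fun s =>
      hp (Filter.mem_generate_of_mem ⟨s, rfl⟩)
    obtain ⟨e₀, he₀R, he₀idem⟩ :=
      exists_idempotent_in_compact_subsemigroup Ultrafilter.continuous_mul_left
        (Set.range (fun q : Ultrafilter S => q * p)) ⟨p * p, p, rfl⟩
        (isCompact_range (Ultrafilter.continuous_mul_left p))
        (by rintro _ ⟨q, rfl⟩ _ ⟨q', rfl⟩; exact ⟨q * p * q', mul_assoc _ _ _⟩)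
    obtain ⟨q, rfl⟩ := he₀R
    have hTq : ∀ s : S, {x | s * x ∈ T} ∈ q * p := by
      intro s
      rw [aux_mem_ultra_mul]
      have hd : derivSet {x | s * x ∈ T} {B : Set S | B ∈ p} = Set.univ := by
        apply Set.eq_univ_of_forall
        intro y
        show {x | y * x ∈ {x | s * x ∈ T}} ∈ p
        have h1 := hpT (s * y)
        have h2 : {x | y * x ∈ {x | s * x ∈ T}} = {x | (s * y) * x ∈ T} := by
          ext x; simp [mul_assoc]
        rw [h2]; exact h1
      rw [hd]; exact Filter.univ_mem
    refine ⟨{B : Set S | B ∈ q * p}, aux_isUltra_coe _, ?_, ?_⟩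
    · rw [aux_cprod_coe, he₀idem]
    · refine ⟨H, ⟨h₀, hh₀⟩, ?_⟩
      apply Set.eq_univ_of_forall
      intro s
      have h1 := hTq s
      have heq : {x | s * x ∈ T} = ⋃ h ∈ H, {x | (h * s) * x ∈ A} := by
        ext x
        simp only [hTdef, Set.mem_setOf_eq, Set.mem_iUnion, mul_assoc]
      rw [heq] at h1
      obtain ⟨h, hh, hmem⟩ := (Ultrafilter.finite_biUnion_mem_iff H.finite_toSet).1 h1
      simp only [Set.mem_iUnion, Set.mem_setOf_eq, derivSet]
      exact ⟨h, hh, hmem⟩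
  · rintro ⟨e, hUltra, _, hSyn⟩
    obtain ⟨U, rfl⟩ := aux_exists_ultrafilter_of_isUltra hUltra
    obtain ⟨H, hH, hcov⟩ := hSyn
    exact aux_thick_to_pws H hH (aux_thick_of_syndetic_deriv U H hcov)
end
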